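/- Suppose 𝔓 is of class (S). Then there exists a supported alternative 𝔔 ≈ 𝔓 such that Q ∧ Q' = 0 holds in the lattice ca_𝐜 for all distinct Q, Q' ∈ 𝔔; equivalently, 1_{S(Q)} ∧ 1_{S(Q')} = 0 in L^∞_𝐜 for all distinct Q, Q' ∈ 𝔔 (a 'disjoint supported alternative'). -/

import Mathlib

open MeasureTheory Set Filter

namespace Robust

universe u

variable {Ω : Type*} [MeasurableSpace Ω]

/-- `N` is a `𝔓`-polar event: every measure in `𝔓` assigns it measure zero. -/
def Polar (𝔓 : Set (Measure Ω)) (N : Set Ω) : Prop := ∀ P ∈ 𝔓, P N = 0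

/-- `f ≤ g` holds `𝔓`-quasi surely. -/
def QSLe (𝔓 : Set (Measure Ω)) (f g : Ω → ℝ) : Prop := Polar 𝔓 {ω | ¬ f ω ≤ g ω}

/-- `f = g` holds `𝔓`-quasi surely; this is the equivalence relation defining `L⁰_𝐜`. -/
def QSEq (𝔓 : Set (Measure Ω)) (f g : Ω → ℝ) : Prop := QSLe 𝔓 f g ∧ QSLe 𝔓 g f

/-- A representative of an element of `L^∞_𝐜`: a measurable, `𝔓`-q.s. bounded function. -/
def MemLinf (𝔓 : Set (Measure Ω)) (f : Ω → ℝ) : Prop :=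
  Measurable f ∧ ∃ m : ℝ, QSLe 𝔓 (fun ω => |f ω|) fun _ => m

/-- The `L^∞_𝐜` norm of (the class of) `f`. -/
noncomputable def linfNorm (𝔓 : Set (Measure Ω)) (f : Ω → ℝ) : ℝ :=
  sInf {m : ℝ | 0 ≤ m ∧ QSLe 𝔓 (fun ω => |f ω|) fun _ => m}

/-- `g` is a `𝔓`-q.s. upper bound of the set of functions `S`. -/
def IsQSUB (𝔓 : Set (Measure Ω)) (S : Set (Ω → ℝ)) (g : Ω → ℝ) : Prop := ∀ f ∈ S, QSLe 𝔓 f g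

/-- `g` is a `𝔓`-q.s. lower bound of the set of functions `S`. -/
def IsQSLB (𝔓 : Set (Measure Ω)) (S : Set (Ω → ℝ)) (g : Ω → ℝ) : Prop := ∀ f ∈ S, QSLe 𝔓 g f

/-- `g` is a supremum of `S` in `L⁰_𝐜` (least upper bound for the q.s. order). -/
def IsQSSup (𝔓 : Set (Measure Ω)) (S : Set (Ω → ℝ)) (g : Ω → ℝ) : Prop :=
  IsQSUB 𝔓 S g ∧ ∀ h : Ω → ℝ, Measurable h → IsQSUB 𝔓 S h → QSLe 𝔓 g h

/-- `g` is an infimum of `S` in `L⁰_𝐜` (greatest lower bound for the q.s. order). -/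
def IsQSInf (𝔓 : Set (Measure Ω)) (S : Set (Ω → ℝ)) (g : Ω → ℝ) : Prop :=
  IsQSLB 𝔓 S g ∧ ∀ h : Ω → ℝ, Measurable h → IsQSLB 𝔓 S h → QSLe 𝔓 h g

/-- `S` is an order support of the measure `μ` relative to `𝔓`. -/
def IsOrderSupport (𝔓 : Set (Measure Ω)) (μ : Measure Ω) (S : Set Ω) : Prop :=
  MeasurableSet S ∧ μ Sᶜ = 0 ∧
    ∀ N : Set Ω, MeasurableSet N → μ (N ∩ S) = 0 → Polar 𝔓 (N ∩ S)

/-- The measure `μ` is supported (relative to the polar events of `𝔓`). -/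
def Supported (𝔓 : Set (Measure Ω)) (μ : Measure Ω) : Prop := ∃ S, IsOrderSupport 𝔓 μ S

/-- Two sets of measures are equivalent: they have the same polar events. -/
def PolarEquiv (𝔓 𝔔 : Set (Measure Ω)) : Prop :=
  ∀ N : Set Ω, MeasurableSet N → (Polar 𝔓 N ↔ Polar 𝔔 N)

/-- `𝔔` is a supported alternative to `𝔓`. -/
def IsSuppAlt (𝔓 𝔔 : Set (Measure Ω)) : Prop :=
  𝔔.Nonempty ∧ (∀ Q ∈ 𝔔, IsProbabilityMeasure Q) ∧ PolarEquiv 𝔓 𝔔 ∧ ∀ Q ∈ 𝔔, Supported 𝔓 Q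

/-- `𝔓` is of class (S). -/
def ClassS (𝔓 : Set (Measure Ω)) : Prop := ∃ 𝔔 : Set (Measure Ω), IsSuppAlt 𝔓 𝔔

/-- The total variation norm of a signed measure. -/
noncomputable def tv (μ : SignedMeasure Ω) : ℝ := (μ.totalVariation Set.univ).toReal

/-- `ca_𝐜`: signed measures whose total variation vanishes on `𝔓`-polar events. -/
def caC (𝔓 : Set (Measure Ω)) : Set (SignedMeasure Ω) :=
  {μ | ∀ N : Set Ω, MeasurableSet N → Polar 𝔓 N → μ.totalVariation N = 0}

/-- `sca_𝐜`: members of `ca_𝐜` whose total variation is supported. -/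
def scaC (𝔓 : Set (Measure Ω)) : Set (SignedMeasure Ω) :=
  {μ | μ ∈ caC 𝔓 ∧ Supported 𝔓 μ.totalVariation}

/-- Integral of `f` against a signed measure, via the Jordan decomposition. -/
noncomputable def integSM (f : Ω → ℝ) (μ : SignedMeasure Ω) : ℝ :=
  ∫ ω, f ω ∂μ.toJordanDecomposition.posPart - ∫ ω, f ω ∂μ.toJordanDecomposition.negPart

/-- `ca_{𝐜,+}`: finite (nonnegative) measures vanishing on `𝔓`-polar events. -/
def caCpos (𝔓 : Set (Measure Ω)) : Set (Measure Ω) :=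
  {μ | IsFiniteMeasure μ ∧ ∀ N : Set Ω, MeasurableSet N → Polar 𝔓 N → μ N = 0}

/-- Order convergence in `L⁰_𝐜` of a net `X` to `x`: there is an antitone net of measurable
functions with q.s. infimum `0` dominating `|X α - x|`. -/
def OrderConvTo (𝔓 : Set (Measure Ω)) {ι : Type u} [Preorder ι]
    (X : ι → Ω → ℝ) (x : Ω → ℝ) : Prop :=
  ∃ Y : ι → Ω → ℝ, (∀ α, Measurable (Y α)) ∧
    (∀ α β, α ≤ β → QSLe 𝔓 (Y β) (Y α)) ∧
    IsQSInf 𝔓 (Set.range Y) (fun _ => 0) ∧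
    ∀ α, QSLe 𝔓 (fun ω => |X α ω - x ω|) (Y α)

/-- Order convergence in `L^∞_𝐜` of a net `X` to `x`: the dominating net lies in `L^∞_𝐜`. -/
def OrderConvToLinf (𝔓 : Set (Measure Ω)) {ι : Type u} [Preorder ι]
    (X : ι → Ω → ℝ) (x : Ω → ℝ) : Prop :=
  ∃ Y : ι → Ω → ℝ, (∀ α, MemLinf 𝔓 (Y α)) ∧
    (∀ α β, α ≤ β → QSLe 𝔓 (Y β) (Y α)) ∧
    IsQSInf 𝔓 (Set.range Y) (fun _ => 0) ∧
    ∀ α, QSLe 𝔓 (fun ω => |X α ω - x ω|) (Y α)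

/-- A set of (classes of) functions in `L⁰_𝐜` is order closed: it contains (a representative of)
the order limit of every order convergent net of its elements. -/
def OrderClosedL0 (𝔓 : Set (Measure Ω)) (𝒞 : Set (Ω → ℝ)) : Prop :=
  ∀ (ι : Type u) [Preorder ι] [IsDirected ι (· ≤ ·)] [Nonempty ι],
    ∀ (X : ι → Ω → ℝ) (x : Ω → ℝ), (∀ α, X α ∈ 𝒞) → Measurable x →
      OrderConvTo 𝔓 X x → ∃ x' ∈ 𝒞, QSEq 𝔓 x x'

/-- A subset of `L^∞_𝐜` is order closed. -/
def OrderClosedLinf (𝔓 : Set (Measure Ω)) (𝒞 : Set (Ω → ℝ)) : Prop :=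
  ∀ (ι : Type u) [Preorder ι] [IsDirected ι (· ≤ ·)] [Nonempty ι],
    ∀ (X : ι → Ω → ℝ) (x : Ω → ℝ), (∀ α, X α ∈ 𝒞) → MemLinf 𝔓 x →
      OrderConvToLinf 𝔓 X x → ∃ x' ∈ 𝒞, QSEq 𝔓 x x'

/-- `L^∞_𝐜` is Dedekind complete: every nonempty subset bounded above has a supremum. -/
def LinfDedekind (𝔓 : Set (Measure Ω)) : Prop :=
  ∀ S : Set (Ω → ℝ), S.Nonempty → (∀ f ∈ S, MemLinf 𝔓 f) →
    (∃ h, MemLinf 𝔓 h ∧ IsQSUB 𝔓 S h) →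
    ∃ g, MemLinf 𝔓 g ∧ IsQSSup 𝔓 S g

/-- `L^∞_𝐜` has the countable sup property. -/
def LinfCountableSup (𝔓 : Set (Measure Ω)) : Prop :=
  ∀ S : Set (Ω → ℝ), (∀ f ∈ S, MemLinf 𝔓 f) →
    ∀ g, MemLinf 𝔓 g → IsQSSup 𝔓 S g →
      ∃ D ⊆ S, D.Countable ∧ IsQSSup 𝔓 D g

/-- indicator function of a set, real valued. -/
noncomputable def indC (A : Set Ω) : Ω → ℝ := A.indicator 1

lemma polar_mono {𝔓 : Set (Measure Ω)} {A B : Set Ω} (h : A ⊆ B) (hB : Polar 𝔓 B) :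
    Polar 𝔓 A := fun P hP =>
  le_antisymm ((measure_mono h).trans (hB P hP).le) zero_le

lemma polar_union {𝔓 : Set (Measure Ω)} {A B : Set Ω} (hA : Polar 𝔓 A) (hB : Polar 𝔓 B) :
    Polar 𝔓 (A ∪ B) := fun P hP =>
  le_antisymm ((measure_union_le _ _).trans (by rw [hA P hP, hB P hP, add_zero])) zero_le

/-- Lemma (lem:disjoint:sup:alt): if `𝔓` is of class (S), there is a disjoint supported
alternative `𝔔 ≈ 𝔓`: for distinct `Q, Q' ∈ 𝔔`, the lattice infimum `Q ⊓ Q'` is `0` in the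
lattice of measures; equivalently, the indicators of any versions of their order supports
satisfy `1_{S(Q)} ∧ 1_{S(Q')} = 0` in `L^∞_𝐜`. -/
theorem exists_disjoint_supported_alternative
    {Ω : Type*} [MeasurableSpace Ω] (𝔓 : Set (Measure Ω)) (h𝔓 : 𝔓.Nonempty)
    (hprob : ∀ P ∈ 𝔓, IsProbabilityMeasure P) (hS : ClassS 𝔓) :
    ∃ 𝔔 : Set (Measure Ω), IsSuppAlt 𝔓 𝔔 ∧
      ∀ Q ∈ 𝔔, ∀ Q' ∈ 𝔔, Q ≠ Q' →
        Q ⊓ Q' = (0 : Measure Ω) ∧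
        ∀ S S' : Set Ω, IsOrderSupport 𝔓 Q S → IsOrderSupport 𝔓 Q' S' →
          Polar 𝔓 (S ∩ S') := by
  obtain ⟨𝔔₀, h𝔔₀ne, h𝔔₀prob, h𝔔₀equiv, h𝔔₀supp⟩ := hS
  -- measures in 𝔔₀ vanish on measurable polar sets
  have h𝔔₀null : ∀ Q ∈ 𝔔₀, ∀ N : Set Ω, MeasurableSet N → Polar 𝔓 N → Q N = 0 := by
    intro Q hQ N hN hpol
    exact ((h𝔔₀equiv N hN).mp hpol) Q hQ
  -- the collection of "good" families
  set 𝒞 : Set (Set (Measure Ω)) :=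
    {R | (∀ Q ∈ R, IsProbabilityMeasure Q ∧ Supported 𝔓 Q ∧
            ∀ N : Set Ω, MeasurableSet N → Polar 𝔓 N → Q N = 0) ∧
         ∀ Q ∈ R, ∀ Q' ∈ R, Q ≠ Q' →
            ∃ S S', IsOrderSupport 𝔓 Q S ∧ IsOrderSupport 𝔓 Q' S' ∧ Polar 𝔓 (S ∩ S')} with h𝒞
  have hchainUB : ∀ c ⊆ 𝒞, IsChain (· ⊆ ·) c → ∃ ub ∈ 𝒞, ∀ s ∈ c, s ⊆ ub := by
    intro c hc hchain
    refine ⟨⋃₀ c, ⟨?_, ?_⟩, fun s hs => subset_sUnion_of_mem hs⟩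
    · rintro Q ⟨t, ht, hQt⟩
      exact (hc ht).1 Q hQt
    · rintro Q ⟨t, ht, hQt⟩ Q' ⟨t', ht', hQt'⟩ hne
      rcases hchain.total ht ht' with h | h
      · exact (hc ht').2 Q (h hQt) Q' hQt' hne
      · exact (hc ht).2 Q hQt Q' (h hQt') hne
  obtain ⟨R, hRmax⟩ := zorn_subset 𝒞 hchainUB
  have hRmem : R ∈ 𝒞 := hRmax.prop
  -- key: R-polar measurable sets are 𝔓-polar (via maximality)
  have key : ∀ N : Set Ω, MeasurableSet N → Polar R N → Polar 𝔓 N := by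
    intro N hN hRN
    by_contra hnot
    have hnot𝔔₀ : ¬ Polar 𝔔₀ N := fun h => hnot ((h𝔔₀equiv N hN).mpr h)
    obtain ⟨Q₀, hQ₀mem, hQ₀N⟩ : ∃ Q₀ ∈ 𝔔₀, Q₀ N ≠ 0 := by
      by_contra h
      push_neg at h
      exact hnot𝔔₀ h
    obtain ⟨S₀, hS₀meas, hS₀null, hS₀supp⟩ := h𝔔₀supp Q₀ hQ₀mem
    have hQ₀prob : IsProbabilityMeasure Q₀ := h𝔔₀prob Q₀ hQ₀mem
    set A : Set Ω := N ∩ S₀ with hAdef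
    have hAmeas : MeasurableSet A := hN.inter hS₀meas
    have hQ₀A : Q₀ A ≠ 0 := by
      intro h0
      apply hQ₀N
      have : Q₀ N ≤ Q₀ A + Q₀ S₀ᶜ := by
        refine (measure_mono ?_).trans (measure_union_le _ _)
        intro x hx
        by_cases hxS : x ∈ S₀
        · exact Or.inl ⟨hx, hxS⟩
        · exact Or.inr hxS
      rw [h0, hS₀null, add_zero] at this
      exact le_antisymm this zero_le
    have hQ₀Atop : Q₀ A ≠ ⊤ := measure_ne_top _ _
    set Q : Measure Ω := (Q₀ A)⁻¹ • Q₀.restrict A with hQdef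
    have hQapp : ∀ B : Set Ω, MeasurableSet B → Q B = (Q₀ A)⁻¹ * Q₀ (B ∩ A) := by
      intro B hB
      rw [hQdef, Measure.smul_apply, Measure.restrict_apply hB, smul_eq_mul]
    have hQprob : IsProbabilityMeasure Q := by
      constructor
      rw [hQapp univ .univ, univ_inter, ENNReal.inv_mul_cancel hQ₀A hQ₀Atop]
    have hQnull : ∀ M : Set Ω, MeasurableSet M → Polar 𝔓 M → Q M = 0 := by
      intro M hM hpol
      rw [hQapp M hM]
      have : Q₀ (M ∩ A) = 0 := le_antisymm
        ((measure_mono inter_subset_left).trans (h𝔔₀null Q₀ hQ₀mem M hM hpol).le) zero_le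
      rw [this, mul_zero]
    have hQsupp : IsOrderSupport 𝔓 Q A := by
      refine ⟨hAmeas, ?_, ?_⟩
      · rw [hQapp Aᶜ hAmeas.compl, compl_inter_self, measure_empty, mul_zero]
      · intro M hM h0
        rw [hQapp (M ∩ A) (hM.inter hAmeas), inter_assoc, inter_self] at h0
        have hQ₀MA : Q₀ (M ∩ A) = 0 := by
          rcases mul_eq_zero.mp h0 with h | h
          · exact absurd (ENNReal.inv_eq_zero.mp h) hQ₀Atop
          · exact h
        have : Polar 𝔓 ((M ∩ N) ∩ S₀) := by
          apply hS₀supp (M ∩ N) (hM.inter hN)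
          rw [inter_assoc, ← hAdef]
          exact hQ₀MA
        rw [inter_assoc, ← hAdef] at this
        exact this
    -- A intersected with any order support of any Q' ∈ R is polar
    have hdisj : ∀ Q' ∈ R, ∀ S' : Set Ω, IsOrderSupport 𝔓 Q' S' → Polar 𝔓 (A ∩ S') := by
      intro Q' hQ' S' ⟨hS'meas, hS'null, hS'supp⟩
      have hQ'N : Q' N = 0 := hRN Q' hQ'
      have : Polar 𝔓 (N ∩ S') := by
        apply hS'supp N hN
        exact le_antisymm ((measure_mono inter_subset_left).trans hQ'N.le) zero_le
      exact polar_mono (inter_subset_inter_left _ inter_subset_left) this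
    -- Q ∉ R
    have hQA1 : Q A ≠ 0 := by
      rw [hQapp A hAmeas, inter_self, ENNReal.inv_mul_cancel hQ₀A hQ₀Atop]
      exact one_ne_zero
    have hQnotR : Q ∉ R := by
      intro hmem
      apply hQA1
      exact le_antisymm ((measure_mono inter_subset_left).trans (hRN Q hmem).le) zero_le
    -- extend R, contradicting maximality
    have hext : insert Q R ∈ 𝒞 := by
      constructor
      · rintro Q'' (rfl | h)
        · exact ⟨hQprob, ⟨A, hQsupp⟩, hQnull⟩
        · exact hRmem.1 Q'' h
      · rintro Q₁ (rfl | h₁) Q₂ (rfl | h₂) hne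
        · exact absurd rfl hne
        · obtain ⟨S₂, hS₂⟩ := (hRmem.1 Q₂ h₂).2.1
          exact ⟨A, S₂, hQsupp, hS₂, hdisj Q₂ h₂ S₂ hS₂⟩
        · obtain ⟨S₁, hS₁⟩ := (hRmem.1 Q₁ h₁).2.1
          refine ⟨S₁, A, hS₁, hQsupp, ?_⟩
          rw [inter_comm]
          exact hdisj Q₁ h₁ S₁ hS₁
        · exact hRmem.2 Q₁ h₁ Q₂ h₂ hne
    have : insert Q R ⊆ R := hRmax.2 hext (subset_insert _ _)
    exact hQnotR (this (mem_insert _ _))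
  -- polar equivalence
  have hequiv : PolarEquiv 𝔓 R := by
    intro N hN
    constructor
    · intro hpol Q hQ
      exact (hRmem.1 Q hQ).2.2 N hN hpol
    · exact key N hN
  -- R is nonempty
  have hRne : R.Nonempty := by
    rw [nonempty_iff_ne_empty]
    rintro rfl
    have : Polar 𝔓 univ := key univ .univ (fun P hP => absurd hP (notMem_empty P))
    obtain ⟨P, hP⟩ := h𝔓
    have := this P hP
    have hP1 : P univ = 1 := (hprob P hP).measure_univ
    rw [hP1] at this
    exact one_ne_zero this
  -- any two order supports of distinct elements intersect in a polar set
  have hAllSupp : ∀ Q ∈ R, ∀ Q' ∈ R, Q ≠ Q' →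
      ∀ S S' : Set Ω, IsOrderSupport 𝔓 Q S → IsOrderSupport 𝔓 Q' S' → Polar 𝔓 (S ∩ S') := by
    intro Q hQ Q' hQ' hne S S' ⟨hSmeas, hSnull, hSsupp⟩ ⟨hS'meas, hS'null, hS'supp⟩
    obtain ⟨T, T', ⟨hTmeas, hTnull, hTsupp⟩, ⟨hT'meas, hT'null, hT'supp⟩, hTT'⟩ :=
      hRmem.2 Q hQ Q' hQ' hne
    have hST : Polar 𝔓 (Tᶜ ∩ S) := by
      apply hSsupp Tᶜ hTmeas.compl
      exact le_antisymm ((measure_mono inter_subset_left).trans hTnull.le) zero_le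
    have hS'T' : Polar 𝔓 (T'ᶜ ∩ S') := by
      apply hS'supp T'ᶜ hT'meas.compl
      exact le_antisymm ((measure_mono inter_subset_left).trans hT'null.le) zero_le
    have hsub : S ∩ S' ⊆ (T ∩ T') ∪ ((Tᶜ ∩ S) ∪ (T'ᶜ ∩ S')) := by
      rintro x ⟨hxS, hxS'⟩
      by_cases hxT : x ∈ T
      · by_cases hxT' : x ∈ T'
        · exact Or.inl ⟨hxT, hxT'⟩
        · exact Or.inr (Or.inr ⟨hxT', hxS'⟩)
      · exact Or.inr (Or.inl ⟨hxT, hxS⟩)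
    exact polar_mono hsub (polar_union hTT' (polar_union hST hS'T'))
  refine ⟨R, ⟨hRne, fun Q hQ => (hRmem.1 Q hQ).1, hequiv, fun Q hQ => (hRmem.1 Q hQ).2.1⟩, ?_⟩
  intro Q hQ Q' hQ' hne
  refine ⟨?_, hAllSupp Q hQ Q' hQ' hne⟩
  -- Q ⊓ Q' = 0
  obtain ⟨S, hSsupp⟩ := (hRmem.1 Q hQ).2.1
  obtain ⟨S', hS'supp⟩ := (hRmem.1 Q' hQ').2.1
  have hpol : Polar 𝔓 (S ∩ S') := hAllSupp Q hQ Q' hQ' hne S S' hSsupp hS'supp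
  have hle : Q ⊓ Q' ≤ Q := inf_le_left
  have hle' : Q ⊓ Q' ≤ Q' := inf_le_right
  have h1 : (Q ⊓ Q') (S ∩ S') = 0 :=
    le_antisymm ((Measure.le_iff'.mp hle _).trans
      ((hRmem.1 Q hQ).2.2 (S ∩ S') (hSsupp.1.inter hS'supp.1) hpol).le) zero_le
  have h2 : (Q ⊓ Q') Sᶜ = 0 :=
    le_antisymm ((Measure.le_iff'.mp hle _).trans hSsupp.2.1.le) zero_le
  have h3 : (Q ⊓ Q') S'ᶜ = 0 :=
    le_antisymm ((Measure.le_iff'.mp hle' _).trans hS'supp.2.1.le) zero_le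
  have huniv : (Q ⊓ Q') univ = 0 := by
    have hsub : (univ : Set Ω) ⊆ (S ∩ S') ∪ (Sᶜ ∪ S'ᶜ) := by
      intro x _
      by_cases hxS : x ∈ S
      · by_cases hxS' : x ∈ S'
        · exact Or.inl ⟨hxS, hxS'⟩
        · exact Or.inr (Or.inr hxS')
      · exact Or.inr (Or.inl hxS)
    have : (Q ⊓ Q') univ ≤ (Q ⊓ Q') (S ∩ S') + ((Q ⊓ Q') Sᶜ + (Q ⊓ Q') S'ᶜ) :=
      (measure_mono hsub).trans ((measure_union_le _ _).trans
        (add_le_add le_rfl (measure_union_le _ _)))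
    rw [h1, h2, h3, add_zero, add_zero] at this
    exact le_antisymm this zero_le
  exact Measure.measure_univ_eq_zero.mp huniv


end Robust
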